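/- A strict partial order ≺ on a finite set X has a trapezoid representation if and only if it is the intersection of two interval orders: that is, if and only if there exist strict partial orders ≺₁ and ≺₂ on X, each admitting an interval representation, such that for all x, y ∈ X, x ≺ y if and only if x ≺₁ y and x ≺₂ y. Hence the trapezoid orders are exactly the orders of interval dimension at most two. -/
import Mathlib


/-- A strict partial order on a finite set has a trapezoid representation if
and only if it is the intersection of two interval orders; that is, the
trapezoid orders are exactly the orders of interval dimension at most two. -/
theorem trapezoid_iff_intersection_of_two_interval_orders
    {X : Type*} [Fintype X] (lt : X → X → Prop)
    (hirr : ∀ u, ¬ lt u u)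
    (htrans : ∀ u v w, lt u v → lt v w → lt u w) :
    (∃ l r L R : X → ℝ,
      (∀ u, l u ≤ r u) ∧ (∀ u, L u ≤ R u) ∧
      (∀ u v, lt u v ↔ (r u < l v ∧ R u < L v))) ↔
    (∃ lt₁ lt₂ : X → X → Prop,
      (∀ u, ¬ lt₁ u u) ∧ (∀ u v w, lt₁ u v → lt₁ v w → lt₁ u w) ∧
      (∀ u, ¬ lt₂ u u) ∧ (∀ u v w, lt₂ u v → lt₂ v w → lt₂ u w) ∧
      (∃ f g : X → ℝ, (∀ u, f u ≤ g u) ∧ (∀ u v, lt₁ u v ↔ g u < f v)) ∧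
      (∃ f g : X → ℝ, (∀ u, f u ≤ g u) ∧ (∀ u v, lt₂ u v ↔ g u < f v)) ∧
      (∀ u v, lt u v ↔ (lt₁ u v ∧ lt₂ u v))) := by
  constructor
  · rintro ⟨l, r, L, R, hlr, hLR, hrep⟩
    refine ⟨fun u v => r u < l v, fun u v => R u < L v,
      fun u h => absurd (hlr u) (not_le.mpr h),
      fun u v w h1 h2 => h1.trans_le ((hlr v).trans h2.le),
      fun u h => absurd (hLR u) (not_le.mpr h),
      fun u v w h1 h2 => h1.trans_le ((hLR v).trans h2.le),
      ⟨l, r, hlr, fun _ _ => Iff.rfl⟩, ⟨L, R, hLR, fun _ _ => Iff.rfl⟩,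
      fun u v => hrep u v⟩
  · rintro ⟨lt₁, lt₂, _, _, _, _, ⟨f₁, g₁, hfg₁, hrep₁⟩, ⟨f₂, g₂, hfg₂, hrep₂⟩, hint⟩
    exact ⟨f₁, g₁, f₂, g₂, hfg₁, hfg₂, fun u v => by
      rw [hint, hrep₁, hrep₂]⟩
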